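/- For all t > 0, ln(sinh(t + t^7/810)) - ln(sinh(t)) > t^6/810. -/

import Mathlib

open Real

lemma lemA (t : ℝ) (ht : 0 ≤ t) : t ^ 3 / 3 ≤ t * Real.cosh t - Real.sinh t := by
  set f : ℝ → ℝ := fun x => x * Real.cosh x - Real.sinh x - x ^ 3 / 3 with hf
  have hderiv : ∀ x : ℝ, HasDerivAt f (x * Real.sinh x - x ^ 2) x := by
    intro x
    have h1 : HasDerivAt (fun x : ℝ => x * Real.cosh x) (1 * Real.cosh x + x * Real.sinh x) x :=
      (hasDerivAt_id x).mul (Real.hasDerivAt_cosh x)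
    have h2 : HasDerivAt Real.sinh (Real.cosh x) x := Real.hasDerivAt_sinh x
    have h3 : HasDerivAt (fun x : ℝ => x ^ 3 / 3) ((3 : ℕ) * x ^ 2 / 3) x :=
      (hasDerivAt_pow 3 x).div_const 3
    have := (h1.sub h2).sub h3
    refine this.congr_deriv ?_
    push_cast
    ring
  have hmono : MonotoneOn f (Set.Ici (0 : ℝ)) := by
    apply monotoneOn_of_deriv_nonneg (convex_Ici 0)
    · exact fun x _ => (hderiv x).continuousAt.continuousWithinAt
    · exact fun x _ => (hderiv x).differentiableAt.differentiableWithinAt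
    · intro x hx
      rw [interior_Ici, Set.mem_Ioi] at hx
      rw [(hderiv x).deriv]
      have hs : x ≤ Real.sinh x := le_of_lt (Real.self_lt_sinh_iff.2 hx)
      nlinarith
  have h0 : f 0 ≤ f t := hmono (Set.self_mem_Ici) ht ht
  simp [hf] at h0
  linarith

theorem W01_lt_Wl1 (t : ℝ) (ht : 0 < t) :
    Real.log (Real.sinh (t + t ^ 7 / 810)) - Real.log (Real.sinh t) > t ^ 6 / 810 := by
  set h := t ^ 7 / 810 with hh
  have hhpos : 0 < h := by positivity
  have hst : 0 < Real.sinh t := Real.sinh_pos_iff.2 ht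
  have hsth : 0 < Real.sinh (t + h) := Real.sinh_pos_iff.2 (by linarith)
  have hadd : Real.sinh (t + h) = Real.sinh t * Real.cosh h + Real.cosh t * Real.sinh h :=
    Real.sinh_add t h
  have hch : 1 ≤ Real.cosh h := Real.one_le_cosh h
  have hsh : h ≤ Real.sinh h := le_of_lt (Real.self_lt_sinh_iff.2 hhpos)
  have key : Real.sinh t * Real.exp (t ^ 6 / 810) < Real.sinh (t + h) := by
    rcases le_or_gt t 1 with h1 | h1
    · -- small t
      set s : ℝ := t ^ 6 / 810 with hs
      have hspos : 0 < s := by positivity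
      have hslt : s < 1 := by nlinarith [pow_le_one₀ ht.le h1 (n := 6)]
      have hexp : Real.exp s ≤ 1 / (1 - s) := by
        have h1 := Real.add_one_le_exp (-s)
        have h2 : Real.exp s * (1 - s) ≤ Real.exp s * Real.exp (-s) :=
          mul_le_mul_of_nonneg_left (by linarith) (Real.exp_pos s).le
        rw [← Real.exp_add, add_neg_cancel, Real.exp_zero] at h2
        rw [le_div_iff₀ (by linarith)]
        linarith
      -- main estimate : (sinh t + h * cosh t) * (1 - s) > sinh t
      have hcosht : Real.cosh t ≤ 3 := by
        have h2 : Real.cosh t ≤ Real.exp t := by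
          have := Real.cosh_add_sinh t
          have : Real.cosh t + Real.sinh t = Real.exp t := this
          linarith
        have h3 : Real.exp t ≤ Real.exp 1 := Real.exp_le_exp.2 h1
        have h4 : Real.exp 1 < 2.7182818286 := Real.exp_one_lt_d9
        linarith
      have hA : t ^ 3 / 3 ≤ t * Real.cosh t - Real.sinh t := lemA t ht.le
      have hmain : Real.sinh t < (Real.sinh t + h * Real.cosh t) * (1 - s) := by
        have ht7 : t ^ 7 ≤ t ^ 3 := by
          calc t ^ 7 = t ^ 3 * t ^ 4 := by ring
          _ ≤ t ^ 3 * 1 := by nlinarith [pow_le_one₀ ht.le h1 (n := 4), pow_pos ht 3]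
          _ = t ^ 3 := by ring
        -- t * cosh t * (1 - s) > sinh t
        have hcpos : 0 < Real.cosh t := Real.cosh_pos t
        have : t ^ 7 * Real.cosh t / 810 < t ^ 3 / 3 := by
          nlinarith [pow_pos ht 3, pow_pos ht 7]
        have hkey : Real.sinh t < t * Real.cosh t * (1 - s) := by
          have : t * Real.cosh t * s = t ^ 7 * Real.cosh t / 810 := by
            rw [hs]; ring
          nlinarith
        have hhs : h = t * s := by rw [hh, hs]; ring
        nlinarith [mul_pos hst hspos]
      calc Real.sinh t * Real.exp s ≤ Real.sinh t * (1 / (1 - s)) := by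
            apply mul_le_mul_of_nonneg_left hexp hst.le
        _ < Real.sinh t + h * Real.cosh t := by
            rw [mul_one_div, div_lt_iff₀ (by linarith : (0:ℝ) < 1 - s)]
            linarith [hmain]
        _ ≤ Real.sinh (t + h) := by
            rw [hadd]
            have : Real.sinh t * 1 ≤ Real.sinh t * Real.cosh h :=
              mul_le_mul_of_nonneg_left hch hst.le
            have h2 : Real.cosh t * h ≤ Real.cosh t * Real.sinh h :=
              mul_le_mul_of_nonneg_left hsh (Real.cosh_pos t).le
            nlinarith
    · -- large t : t ≥ 1
      have hsc : Real.sinh t < Real.cosh t := by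
        have := Real.cosh_sub_sinh t
        nlinarith [Real.exp_pos (-t)]
      have hshpos : 0 < Real.sinh h := Real.sinh_pos_iff.2 hhpos
      have hexp : Real.cosh h + Real.sinh h = Real.exp h := Real.cosh_add_sinh h
      have h66 : t ^ 6 / 810 ≤ h := by
        rw [hh]
        have : t ^ 6 ≤ t ^ 7 := by nlinarith [pow_pos ht 6, pow_le_pow_right₀ h1.le (by norm_num : (6:ℕ) ≤ 7)]
        linarith
      calc Real.sinh t * Real.exp (t ^ 6 / 810) ≤ Real.sinh t * Real.exp h := by
            apply mul_le_mul_of_nonneg_left (Real.exp_le_exp.2 h66) hst.le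
        _ = Real.sinh t * Real.cosh h + Real.sinh t * Real.sinh h := by rw [← hexp]; ring
        _ < Real.sinh t * Real.cosh h + Real.cosh t * Real.sinh h := by nlinarith
        _ = Real.sinh (t + h) := hadd.symm
  have hlog := Real.log_lt_log (by positivity) key
  rw [Real.log_mul hst.ne' (Real.exp_ne_zero _), Real.log_exp] at hlog
  linarith
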